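/- Fix a finite independent exchange model. Let q ⊆ E, r ⊆ q, and let q' ⊆ E with q' ∩ q = ∅. Suppose ρ(e) + (1 − ρ(e))·φQ(e) ≤ φN(e) for every e ∈ q' (additional queries cannot increase an edge's overall probability of rejection or failure). Then for every structure c ∈ C, additional edge queries cannot decrease its expected final weight: G(c, s_{q,r}) ≤ Σ_{r' ⊆ q'} (∏_{e∈r'} ρ(e)) · (∏_{e∈q'\r'} (1 − ρ(e))) · G(c, s_{q∪q', r∪r'}). -/

import Mathlib

/-- A structure in an exchange is either a cycle or a chain. -/
inductive StructKind : Type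
  | cycle : StructKind
  | chain : StructKind
  deriving DecidableEq

/-- A structure: a list of edges together with a cycle/chain tag. -/
abbrev ExchangeStruct (E : Type) := List E × StructKind

/-- A finite independent exchange model: a finite edge set `E`, nonnegative edge
weights `w`, a finite set `structs` of structures (lists of distinct edges tagged as
cycles or chains), a nonempty finite collection `matchings` of feasible matchings
(subsets of `structs`), and per-edge probabilities `ρ e` (rejection if queried),
`φQ e` (post-match failure if queried and accepted), `φN e` (post-match failure if
not queried), all in `[0,1]`; all edges are independent. -/
structure ExchangeModel (E : Type) [Fintype E] [DecidableEq E] where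
  w : E → ℝ
  w_nonneg : ∀ e, 0 ≤ w e
  structs : Finset (ExchangeStruct E)
  structs_nodup : ∀ c ∈ structs, c.1.Nodup
  matchings : Finset (Finset (ExchangeStruct E))
  matchings_nonempty : matchings.Nonempty
  matchings_sub : ∀ x ∈ matchings, x ⊆ structs
  ρ : E → ℝ
  φQ : E → ℝ
  φN : E → ℝ
  ρ_mem : ∀ e, ρ e ∈ Set.Icc (0 : ℝ) 1
  φQ_mem : ∀ e, φQ e ∈ Set.Icc (0 : ℝ) 1
  φN_mem : ∀ e, φN e ∈ Set.Icc (0 : ℝ) 1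

variable {E : Type} [Fintype E] [DecidableEq E]

/-- Expected final weight of a chain with edge list `es`:
`Σ_{k} w (e_k) · Π_{j ≤ k} s (e_j)`. -/
def chainVal (w s : E → ℝ) : List E → ℝ
  | [] => 0
  | e :: es => s e * (w e + chainVal w s es)

/-- Expected final weight `G c s` of a structure `c` under per-edge success
probabilities `s`. -/
def structVal (w s : E → ℝ) (c : ExchangeStruct E) : ℝ :=
  match c.2 with
  | .cycle => (c.1.map w).sum * (c.1.map s).prod
  | .chain => chainVal w s c.1

/-- Per-edge success probabilities `s_{q,r}` for query set `q` and rejection set `r`. -/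
def succProb (M : ExchangeModel E) (q r : Finset E) : E → ℝ :=
  fun e => if e ∈ r then 0 else if e ∈ q then 1 - M.φQ e else 1 - M.φN e

/-- Probability `P_q r` of rejection set `r ⊆ q`. -/
def rejProb (M : ExchangeModel E) (q r : Finset E) : ℝ :=
  (∏ e ∈ r, M.ρ e) * ∏ e ∈ q \ r, (1 - M.ρ e)

/-- Expected final weight of a matching `x` under success probabilities `s`. -/
def matchVal (M : ExchangeModel E) (s : E → ℝ) (x : Finset (ExchangeStruct E)) : ℝ :=
  ∑ c ∈ x, structVal M.w s c

/-- The failure-aware optimal expected matching weight `max_{x ∈ M} Σ_{c ∈ x} G(c, s)`. -/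
def bestVal (M : ExchangeModel E) (s : E → ℝ) : ℝ :=
  M.matchings.sup' M.matchings_nonempty (matchVal M s)

/-- The failure-aware value `V^FA q` of a query set `q`. -/
def VFA (M : ExchangeModel E) (q : Finset E) : ℝ :=
  ∑ r ∈ q.powerset, rejProb M q r * bestVal M (succProb M q r)

/-- Nominal weight of (the edge list of) a chain under rejection set `r`: the summed
weight of all edges preceding the first rejected edge. -/
def chainNominal (w : E → ℝ) (r : Finset E) : List E → ℝ
  | [] => 0
  | e :: es => if e ∈ r then 0 else w e + chainNominal w r es

/-- Nominal weight `F c r` of a structure `c` under rejection set `r`. -/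
def nominalVal (w : E → ℝ) (r : Finset E) (c : ExchangeStruct E) : ℝ :=
  match c.2 with
  | .cycle => if ∀ e ∈ c.1, e ∉ r then (c.1.map w).sum else 0
  | .chain => chainNominal w r c.1

/-- `m` is a max-weight selection for query set `q`: to each rejection set `r ⊆ q` it
assigns a feasible matching maximizing the nominal weight `Σ_{c ∈ x} F(c, r)`. -/
def IsMaxWeightSelection (M : ExchangeModel E) (q : Finset E)
    (m : Finset E → Finset (ExchangeStruct E)) : Prop :=
  ∀ r ∈ q.powerset, m r ∈ M.matchings ∧
    ∀ x ∈ M.matchings, ∑ c ∈ x, nominalVal M.w r c ≤ ∑ c ∈ m r, nominalVal M.w r c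

/-- The max-weight value `V^MAX (q; m)` of query set `q` under max-weight selection `m`. -/
def VMAX (M : ExchangeModel E) (q : Finset E)
    (m : Finset E → Finset (ExchangeStruct E)) : ℝ :=
  ∑ r ∈ q.powerset, rejProb M q r * ∑ c ∈ m r, structVal M.w (succProb M q r) c

/-- Additional edge queries cannot decrease a structure's expected final weight:
if `ρ e + (1 - ρ e) · φQ e ≤ φN e` for every `e` in the additional query set `q'`
(disjoint from `q`), then for every structure `c ∈ C`,
`G(c, s_{q,r}) ≤ Σ_{r' ⊆ q'} (Π_{e ∈ r'} ρ e) (Π_{e ∈ q' \ r'} (1 - ρ e)) · G(c, s_{q ∪ q', r ∪ r'})`. -/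
lemma listProd_nonneg {s : E → ℝ} (hs : ∀ e, 0 ≤ s e) :
    ∀ es : List E, 0 ≤ (es.map s).prod
  | [] => by simp
  | e :: es => by
      simp only [List.map_cons, List.prod_cons]
      exact mul_nonneg (hs e) (listProd_nonneg hs es)

lemma listProd_mono {s s' : E → ℝ} (hs : ∀ e, 0 ≤ s e) (hss : ∀ e, s e ≤ s' e) :
    ∀ es : List E, (es.map s).prod ≤ (es.map s').prod
  | [] => le_refl 1
  | e :: es => by
      simp only [List.map_cons, List.prod_cons]
      exact mul_le_mul (hss e) (listProd_mono hs hss es) (listProd_nonneg hs es)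
        (le_trans (hs e) (hss e))

lemma chainVal_nonneg {w s : E → ℝ} (hw : ∀ e, 0 ≤ w e) (hs : ∀ e, 0 ≤ s e) :
    ∀ es : List E, 0 ≤ chainVal w s es
  | [] => le_refl 0
  | e :: es => mul_nonneg (hs e) (add_nonneg (hw e) (chainVal_nonneg hw hs es))

lemma chainVal_mono {w s s' : E → ℝ} (hw : ∀ e, 0 ≤ w e) (hs : ∀ e, 0 ≤ s e)
    (hss : ∀ e, s e ≤ s' e) :
    ∀ es : List E, chainVal w s es ≤ chainVal w s' es
  | [] => le_refl 0
  | e :: es => by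
      simp only [chainVal]
      exact mul_le_mul (hss e) (by linarith [chainVal_mono hw hs hss es])
        (add_nonneg (hw e) (chainVal_nonneg hw hs es)) (le_trans (hs e) (hss e))

lemma structVal_mono {w s s' : E → ℝ} (hw : ∀ e, 0 ≤ w e) (hs : ∀ e, 0 ≤ s e)
    (hss : ∀ e, s e ≤ s' e) (c : ExchangeStruct E) :
    structVal w s c ≤ structVal w s' c := by
  obtain ⟨es, k⟩ := c
  cases k with
  | cycle =>
      simp only [structVal]
      refine mul_le_mul_of_nonneg_left (listProd_mono hs hss es) ?_
      refine List.sum_nonneg ?_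
      intro x hx
      obtain ⟨e, _, rfl⟩ := List.mem_map.mp hx
      exact hw e
  | chain => exact chainVal_mono hw hs hss es

lemma chainVal_update_not_mem {w s : E → ℝ} {a : E} (t : ℝ) :
    ∀ es : List E, a ∉ es → chainVal w (Function.update s a t) es = chainVal w s es
  | [], _ => rfl
  | e :: es, h => by
      have he : e ≠ a := by rintro rfl; exact h (List.mem_cons_self)
      simp only [chainVal, Function.update_of_ne he,
        chainVal_update_not_mem t es (fun h' => h (List.mem_cons_of_mem _ h'))]

lemma mapProd_update_not_mem {s : E → ℝ} {a : E} (t : ℝ) :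
    ∀ es : List E, a ∉ es → (es.map (Function.update s a t)).prod = (es.map s).prod
  | [], _ => rfl
  | e :: es, h => by
      have he : e ≠ a := by rintro rfl; exact h (List.mem_cons_self)
      simp only [List.map_cons, List.prod_cons, Function.update_of_ne he,
        mapProd_update_not_mem t es (fun h' => h (List.mem_cons_of_mem _ h'))]

lemma chainVal_affine (w s : E → ℝ) (a : E) :
    ∀ es : List E, es.Nodup →
      ∃ A B : ℝ, ∀ t, chainVal w (Function.update s a t) es = A + B * t := by
  intro es
  induction es with
  | nil => exact fun _ => ⟨0, 0, fun t => by simp [chainVal]⟩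
  | cons e es ih =>
      intro hnd
      rcases List.nodup_cons.mp hnd with ⟨he, hnd'⟩
      by_cases hea : e = a
      · subst hea
        refine ⟨0, w e + chainVal w s es, fun t => ?_⟩
        simp only [chainVal, Function.update_self, chainVal_update_not_mem t es he]
        ring
      · obtain ⟨A, B, hAB⟩ := ih hnd'
        refine ⟨s e * (w e + A), s e * B, fun t => ?_⟩
        simp only [chainVal, Function.update_of_ne hea, hAB t]
        ring

lemma mapProd_affine (s : E → ℝ) (a : E) :
    ∀ es : List E, es.Nodup →
      ∃ A B : ℝ, ∀ t, (es.map (Function.update s a t)).prod = A + B * t := by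
  intro es
  induction es with
  | nil => exact fun _ => ⟨1, 0, fun t => by simp⟩
  | cons e es ih =>
      intro hnd
      rcases List.nodup_cons.mp hnd with ⟨he, hnd'⟩
      by_cases hea : e = a
      · subst hea
        refine ⟨0, (es.map s).prod, fun t => ?_⟩
        simp only [List.map_cons, List.prod_cons, Function.update_self,
          mapProd_update_not_mem t es he]
        ring
      · obtain ⟨A, B, hAB⟩ := ih hnd'
        refine ⟨s e * A, s e * B, fun t => ?_⟩
        simp only [List.map_cons, List.prod_cons, Function.update_of_ne hea, hAB t]
        ring

lemma structVal_affine (w s : E → ℝ) (a : E) (c : ExchangeStruct E) (hnd : c.1.Nodup) :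
    ∃ A B : ℝ, ∀ t, structVal w (Function.update s a t) c = A + B * t := by
  obtain ⟨es, k⟩ := c
  cases k with
  | cycle =>
      obtain ⟨A, B, hAB⟩ := mapProd_affine s a es hnd
      refine ⟨(es.map w).sum * A, (es.map w).sum * B, fun t => ?_⟩
      simp only [structVal, hAB t]
      ring
  | chain =>
      obtain ⟨A, B, hAB⟩ := chainVal_affine w s a es hnd
      exact ⟨A, B, fun t => hAB t⟩

lemma structVal_update_comb (w s : E → ℝ) (a : E) (c : ExchangeStruct E)
    (hnd : c.1.Nodup) (p t1 t2 : ℝ) :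
    (1 - p) * structVal w (Function.update s a t1) c
      + p * structVal w (Function.update s a t2) c
      = structVal w (Function.update s a ((1 - p) * t1 + p * t2)) c := by
  obtain ⟨A, B, hAB⟩ := structVal_affine w s a c hnd
  rw [hAB, hAB, hAB]; ring

theorem structVal_le_expected_structVal_of_more_queries
    (M : ExchangeModel E) (q r q' : Finset E)
    (hr : r ⊆ q) (hdisj : Disjoint q' q)
    (h : ∀ e ∈ q', M.ρ e + (1 - M.ρ e) * M.φQ e ≤ M.φN e)
    (c : ExchangeStruct E) (hc : c ∈ M.structs) :
    structVal M.w (succProb M q r) c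
      ≤ ∑ r' ∈ q'.powerset,
          (∏ e ∈ r', M.ρ e) * (∏ e ∈ q' \ r', (1 - M.ρ e)) *
            structVal M.w (succProb M (q ∪ q') (r ∪ r')) c := by
  have hnd := M.structs_nodup c hc
  revert hdisj h
  induction q' using Finset.induction_on with
  | empty => intro _ _; simp
  | @insert a q'' ha IH =>
    intro hdisj h
    have haq : a ∉ q := Finset.disjoint_left.mp hdisj (Finset.mem_insert_self a q'')
    have har : a ∉ r := fun hh => haq (hr hh)
    have hdisj'' : Disjoint q'' q :=
      Finset.disjoint_of_subset_left (Finset.subset_insert a q'') hdisj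
    have h'' : ∀ e ∈ q'', M.ρ e + (1 - M.ρ e) * M.φQ e ≤ M.φN e :=
      fun e he => h e (Finset.mem_insert_of_mem he)
    rw [Finset.sum_powerset_insert ha]
    refine le_trans (IH hdisj'' h'') ?_
    rw [← Finset.sum_add_distrib]
    refine Finset.sum_le_sum ?_
    intro r' hr'
    have hr'q : r' ⊆ q'' := Finset.mem_powerset.mp hr'
    have har' : a ∉ r' := fun hh => ha (hr'q hh)
    have harr : a ∉ r ∪ r' := by simp [har, har']
    set s0 : E → ℝ := succProb M (q ∪ q'') (r ∪ r') with hs0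
    -- function identities
    have hfun1 : succProb M (q ∪ insert a q'') (r ∪ r')
        = Function.update s0 a (1 - M.φQ a) := by
      funext e
      by_cases hea : e = a
      · subst hea
        simp [succProb, harr, Function.update_self]
      · simp only [succProb, Function.update_of_ne hea, hs0, Finset.mem_union,
          Finset.mem_insert, hea, false_or]
    have hfun2 : succProb M (q ∪ insert a q'') (r ∪ insert a r')
        = Function.update s0 a 0 := by
      funext e
      by_cases hea : e = a
      · subst hea
        simp [succProb, Function.update_self]
      · simp only [succProb, Function.update_of_ne hea, hs0, Finset.mem_union,
          Finset.mem_insert, hea, false_or]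
    have hs0a : s0 = Function.update s0 a (1 - M.φN a) := by
      have : s0 a = 1 - M.φN a := by
        have haq'' : a ∉ q ∪ q'' := by simp [haq, ha]
        simp [hs0, succProb, harr, haq'']
      rw [← this, Function.update_eq_self]
    -- set rewrites
    have hset1 : insert a q'' \ r' = insert a (q'' \ r') := by
      ext e; simp only [Finset.mem_sdiff, Finset.mem_insert]
      constructor
      · rintro ⟨(rfl | he), hn⟩
        · exact Or.inl rfl
        · exact Or.inr ⟨he, hn⟩
      · rintro (rfl | ⟨he, hn⟩)
        · exact ⟨Or.inl rfl, har'⟩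
        · exact ⟨Or.inr he, hn⟩
    have hset2 : insert a q'' \ insert a r' = q'' \ r' := by
      ext e; simp only [Finset.mem_sdiff, Finset.mem_insert]
      constructor
      · rintro ⟨(rfl | he), hn⟩
        · exact absurd (Or.inl rfl) hn
        · exact ⟨he, fun h' => hn (Or.inr h')⟩
      · rintro ⟨he, hn⟩
        exact ⟨Or.inr he, by rintro (rfl | h') <;> [exact ha he; exact hn h']⟩
    have hana : a ∉ q'' \ r' := fun hh => ha (Finset.mem_sdiff.mp hh).1
    have hP : (0:ℝ) ≤ (∏ e ∈ r', M.ρ e) * (∏ e ∈ q'' \ r', (1 - M.ρ e)) := by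
      refine mul_nonneg (Finset.prod_nonneg fun e _ => (M.ρ_mem e).1)
        (Finset.prod_nonneg fun e _ => by linarith [(M.ρ_mem e).2])
    have hρa0 : 0 ≤ M.ρ a := (M.ρ_mem a).1
    have hρa1 : M.ρ a ≤ 1 := (M.ρ_mem a).2
    -- rewrite both new terms
    rw [hfun1, hfun2, hset1, hset2,
      Finset.prod_insert hana, Finset.prod_insert har']
    have hcomb := structVal_update_comb M.w s0 a c hnd (M.ρ a) (1 - M.φQ a) 0
    have hmono : structVal M.w s0 c
        ≤ structVal M.w (Function.update s0 a ((1 - M.ρ a) * (1 - M.φQ a) + M.ρ a * 0)) c := by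
      conv_lhs => rw [hs0a]
      refine structVal_mono M.w_nonneg ?_ ?_ c
      · intro e
        by_cases hea : e = a
        · subst hea
          simp only [Function.update_self]
          linarith [(M.φN_mem e).2]
        · rw [Function.update_of_ne hea]
          simp only [hs0, succProb]
          split_ifs <;> [exact le_refl 0; linarith [(M.φQ_mem e).2]; linarith [(M.φN_mem e).2]]
      · intro e
        by_cases hea : e = a
        · subst hea
          simp only [Function.update_self]
          have := h e (Finset.mem_insert_self e q'')
          nlinarith
        · rw [Function.update_of_ne hea, Function.update_of_ne hea]
    calc (∏ e ∈ r', M.ρ e) * (∏ e ∈ q'' \ r', (1 - M.ρ e)) * structVal M.w s0 c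
        ≤ (∏ e ∈ r', M.ρ e) * (∏ e ∈ q'' \ r', (1 - M.ρ e)) *
            structVal M.w (Function.update s0 a ((1 - M.ρ a) * (1 - M.φQ a) + M.ρ a * 0)) c :=
          mul_le_mul_of_nonneg_left hmono hP
      _ = (∏ e ∈ r', M.ρ e) * ((1 - M.ρ a) * ∏ e ∈ q'' \ r', (1 - M.ρ e)) *
            structVal M.w (Function.update s0 a (1 - M.φQ a)) c
          + M.ρ a * (∏ e ∈ r', M.ρ e) * (∏ e ∈ q'' \ r', (1 - M.ρ e)) *
            structVal M.w (Function.update s0 a 0) c := by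
          rw [← hcomb]; ring
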